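/- Let O(n) = ⌊(n+2)/2⌋ - ⌊(n+2)/3⌋ and P(n) = Σ_{d|n} μ(d)·O(n/d). For every n ≥ 2, if P(n) = O(n) then n is prime. -/

import Mathlib

def OrbitCount (n : ℕ) : ℤ := ((n + 2) / 2 : ℕ) - ((n + 2) / 3 : ℕ)

def PrimCount (n : ℕ) : ℤ :=
  ∑ d ∈ n.divisors, ArithmeticFunction.moebius d * OrbitCount (n / d)

/-- Solutions `(s, r)` of `2s + r = n` with `r ≤ s`. -/
def Sol (n : ℕ) : Finset (ℕ × ℕ) :=
  (Finset.range (n + 1) ×ˢ Finset.range (n + 1)).filter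
    (fun x => 2 * x.1 + x.2 = n ∧ x.2 ≤ x.1)

lemma mem_Sol {n : ℕ} {x : ℕ × ℕ} : x ∈ Sol n ↔ 2 * x.1 + x.2 = n ∧ x.2 ≤ x.1 := by
  simp only [Sol, Finset.mem_filter, Finset.mem_product, Finset.mem_range]
  omega

lemma card_Sol (n : ℕ) : (Sol n).card = (n + 2) / 2 - (n + 2) / 3 := by
  rw [show (Sol n).card = (Finset.Icc ((n + 2) / 3) (n / 2)).card from
    (Finset.card_nbij' (fun s => (s, n - 2 * s)) (fun x => x.1)
      (fun s hs => by
        simp only [Finset.mem_coe, Finset.mem_Icc] at hs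
        rw [Finset.mem_coe, mem_Sol]
        dsimp only
        omega)
      (fun x hx => by
        rw [Finset.mem_coe, mem_Sol] at hx
        simp only [Finset.mem_coe, Finset.mem_Icc]
        omega)
      (fun s hs => by simp only [Finset.mem_coe, Finset.mem_Icc] at hs; rfl)
      (fun x hx => by
        rw [Finset.mem_coe, mem_Sol] at hx
        dsimp only
        have : n - 2 * x.1 = x.2 := by omega
        rw [this])).symm]
  rw [Nat.card_Icc]
  omega

lemma orbit_eq_card (n : ℕ) : OrbitCount n = ((Sol n).card : ℤ) := by
  rw [card_Sol, OrbitCount]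
  have : (n + 2) / 3 ≤ (n + 2) / 2 := Nat.div_le_div_left (by norm_num) (by norm_num)
  push_cast [Nat.cast_sub this]
  ring

lemma card_scaled {n d : ℕ} (hd : d ∣ n) (hd0 : 0 < d) :
    (Sol (n / d)).card = ((Sol n).filter (fun x => d ∣ x.1 ∧ d ∣ x.2)).card := by
  obtain ⟨m, rfl⟩ := hd
  rw [Nat.mul_div_cancel_left m hd0]
  apply Finset.card_nbij (fun x => (d * x.1, d * x.2))
  · intro x hx
    rw [Finset.mem_coe, mem_Sol] at hx
    rw [Finset.mem_coe, Finset.mem_filter, mem_Sol]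
    refine ⟨⟨by rw [← hx.1]; ring, by exact Nat.mul_le_mul_left d hx.2⟩,
      ⟨Dvd.intro _ rfl, Dvd.intro _ rfl⟩⟩
  · intro a _ b _ hab
    have h1 := congrArg Prod.fst hab
    have h2 := congrArg Prod.snd hab
    simp only at h1 h2
    have e1 : a.1 = b.1 := by
      exact Nat.eq_of_mul_eq_mul_left hd0 h1
    have e2 : a.2 = b.2 := Nat.eq_of_mul_eq_mul_left hd0 h2
    exact Prod.ext e1 e2
  · intro x hx
    simp only [Finset.coe_filter, Set.mem_setOf_eq, Finset.mem_coe] at hx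
    obtain ⟨hx, ⟨a, ha⟩, ⟨b, hb⟩⟩ := hx
    rw [mem_Sol] at hx
    refine ⟨(a, b), ?_, ?_⟩
    · simp only [Finset.mem_coe, mem_Sol]
      constructor
      · have : d * (2 * a + b) = d * m := by rw [← hx.1, ha, hb]; ring
        exact Nat.eq_of_mul_eq_mul_left hd0 this
      · have : d * b ≤ d * a := by rw [← ha, ← hb]; exact hx.2
        exact Nat.le_of_mul_le_mul_left this hd0
    · exact Prod.ext ha.symm hb.symm

lemma sum_moebius_divisors (m : ℕ) :
    (∑ d ∈ m.divisors, (ArithmeticFunction.moebius d : ℤ)) = if m = 1 then 1 else 0 := by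
  have := congrArg (fun f : ArithmeticFunction ℤ => f m)
    ArithmeticFunction.moebius_mul_coe_zeta
  rw [ArithmeticFunction.coe_mul_zeta_apply, ArithmeticFunction.one_apply] at this
  exact this

lemma prim_eq_card (n : ℕ) (hn : 0 < n) :
    PrimCount n = (((Sol n).filter (fun x => Nat.gcd x.1 x.2 = 1)).card : ℤ) := by
  have key : ∀ d ∈ n.divisors,
      ArithmeticFunction.moebius d * OrbitCount (n / d) =
        ∑ x ∈ Sol n, if d ∣ x.1 ∧ d ∣ x.2 then (ArithmeticFunction.moebius d : ℤ) else 0 := by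
    intro d hd
    rw [Nat.mem_divisors] at hd
    rw [orbit_eq_card, card_scaled hd.1 (Nat.pos_of_dvd_of_pos hd.1 hn)]
    rw [← Finset.sum_filter, Finset.sum_const, nsmul_eq_mul, mul_comm]
  rw [PrimCount, Finset.sum_congr rfl key, Finset.sum_comm]
  rw [Finset.card_eq_sum_ones, Nat.cast_sum]
  rw [Finset.sum_filter]
  apply Finset.sum_congr rfl
  intro x hx
  rw [mem_Sol] at hx
  have hx0 : 0 < Nat.gcd x.1 x.2 := by
    rcases Nat.eq_zero_or_pos (Nat.gcd x.1 x.2) with h0 | h0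
    · exfalso
      have h1 := Nat.eq_zero_of_gcd_eq_zero_left h0
      have h2 := Nat.eq_zero_of_gcd_eq_zero_right h0
      omega
    · exact h0
  have hgdvd : Nat.gcd x.1 x.2 ∣ n := by
    rw [← hx.1]
    exact Nat.dvd_add (Dvd.dvd.mul_left (Nat.gcd_dvd_left _ _) 2) (Nat.gcd_dvd_right _ _)
  have hset : n.divisors.filter (fun d => d ∣ x.1 ∧ d ∣ x.2) = (Nat.gcd x.1 x.2).divisors := by
    ext d
    simp only [Finset.mem_filter, Nat.mem_divisors]
    constructor
    · rintro ⟨⟨_, _⟩, h1, h2⟩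
      exact ⟨Nat.dvd_gcd h1 h2, hx0.ne'⟩
    · rintro ⟨hdg, _⟩
      exact ⟨⟨hdg.trans hgdvd, hn.ne'⟩, (hdg.trans (Nat.gcd_dvd_left _ _)),
        (hdg.trans (Nat.gcd_dvd_right _ _))⟩
  calc (∑ d ∈ n.divisors, if d ∣ x.1 ∧ d ∣ x.2 then (ArithmeticFunction.moebius d : ℤ) else 0)
      = ∑ d ∈ n.divisors.filter (fun d => d ∣ x.1 ∧ d ∣ x.2),
          (ArithmeticFunction.moebius d : ℤ) := by
        rw [Finset.sum_filter]
    _ = ∑ d ∈ (Nat.gcd x.1 x.2).divisors, (ArithmeticFunction.moebius d : ℤ) := by rw [hset]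
    _ = if Nat.gcd x.1 x.2 = 1 then 1 else 0 := sum_moebius_divisors _

theorem prim_eq_orbit_imp_prime (n : ℕ) (hn : 2 ≤ n) (h : PrimCount n = OrbitCount n) :
    n.Prime := by
  by_contra hnp
  -- get a prime factor q and cofactor m ≥ 2
  obtain ⟨q, hq, hqd⟩ := Nat.exists_prime_and_dvd (show n ≠ 1 by omega)
  obtain ⟨m, rfl⟩ := hqd
  have hm2 : 2 ≤ m := by
    rcases Nat.lt_or_ge m 2 with hm | hm
    · interval_cases m
      · omega
      · exact absurd (by simpa using hq) hnp
    · exact hm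
  have hn0 : 0 < q * m := by positivity
  -- the filter equals the whole set
  have hcard : (((Sol (q * m)).filter (fun x => Nat.gcd x.1 x.2 = 1)).card : ℤ) =
      ((Sol (q * m)).card : ℤ) := by
    rw [← prim_eq_card _ hn0, ← orbit_eq_card, h]
  have hcard' : ((Sol (q * m)).filter (fun x => Nat.gcd x.1 x.2 = 1)).card =
      (Sol (q * m)).card := Nat.cast_injective hcard
  have hfull : (Sol (q * m)).filter (fun x => Nat.gcd x.1 x.2 = 1) = Sol (q * m) :=
    Finset.eq_of_subset_of_card_le (Finset.filter_subset _ _) (le_of_eq hcard'.symm)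
  -- exhibit a non-coprime solution
  set x : ℕ × ℕ := (q * (m / 2), q * (m % 2)) with hxdef
  have hxmem : x ∈ Sol (q * m) := by
    rw [mem_Sol]
    constructor
    · have : 2 * (m / 2) + m % 2 = m := by omega
      calc 2 * (q * (m / 2)) + q * (m % 2) = q * (2 * (m / 2) + m % 2) := by ring
        _ = q * m := by rw [this]
    · exact Nat.mul_le_mul_left q (by omega)
  have hxg : Nat.gcd x.1 x.2 = 1 := by
    have := hfull ▸ hxmem
    rw [← hfull] at hxmem
    exact (Finset.mem_filter.mp hxmem).2
  have hqg : q ∣ Nat.gcd x.1 x.2 :=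
    Nat.dvd_gcd (Dvd.intro _ rfl) (Dvd.intro _ rfl)
  rw [hxg] at hqg
  exact hq.ne_one (Nat.eq_one_of_dvd_one hqg)
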